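/- Let R be a curvature-like tensor on ℝ^N of negative boost order with respect to a null frame, i.e. all null-frame components of boost weight ≥ 0 vanish (the only possibly nonzero components are R_{011i}, R_{1ijk}, R_{1i1j}). If the bivector square vanishes, R^{(2)}_{abcd} = 0, and the Ricci contraction vanishes, Ric(R) = 0, then also R_{011i} = 0 and R_{1ijk} = 0 for all spatial i, j, k; that is, R is of principal type N and its only possibly nonvanishing null-frame components are R_{1i1j}. -/

import Mathlib

open Matrix

/-! Null-frame formalism: we work with the components of tensors with respect to a
null frame `e_0 = ℓ, e_1 = n, e_2 = m_2, …, e_{N−1} = m_{N−1}` for the Minkowski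
form `η` on `ℝ^N` (so `η(ℓ,n) = 1`, `η(m_i,m_j) = δ_{ij}`, all other frame products
vanish).  `ηnf N` is the matrix of frame components `η_{AB}`, and `ηup N = (ηnf N)⁻¹`
is the matrix of the inverse-metric components `η^{AB}` used to raise indices.
Spatial indices are those `i : Fin N` with `2 ≤ i`. -/

/-- Frame components `η_{AB}` of the Minkowski form in a null frame. -/
def ηnf (N : ℕ) : Matrix (Fin N) (Fin N) ℝ :=
  Matrix.of fun A B =>
    if ((A : ℕ) = 0 ∧ (B : ℕ) = 1) ∨ ((A : ℕ) = 1 ∧ (B : ℕ) = 0) then 1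
    else if A = B ∧ 2 ≤ (A : ℕ) then 1 else 0

/-- Components `η^{AB}` of the inverse metric in a null frame. -/
noncomputable def ηup (N : ℕ) : Matrix (Fin N) (Fin N) ℝ := (ηnf N)⁻¹

/-- The boost weight of a null-frame index: `+1` for the index `0` (the `ℓ` slot),
`−1` for the index `1` (the `n` slot), `0` for spatial indices. -/
def bw {N : ℕ} (A : Fin N) : ℤ :=
  if (A : ℕ) = 0 then 1 else if (A : ℕ) = 1 then -1 else 0

/-- A curvature-like tensor: a 4-linear form (given here by its null-frame components)
with `R_{abcd} = −R_{bacd} = R_{cdab}`. -/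
def CurvLike {N : ℕ} (R : Fin N → Fin N → Fin N → Fin N → ℝ) : Prop :=
  (∀ a b c d, R a b c d = -R b a c d) ∧ (∀ a b c d, R a b c d = R c d a b)

/-- The bivector square of a curvature-like tensor:
`R⁽²⁾_{abcd} = (1/2) R_{abef} η^{eg} η^{fh} R_{ghcd}`. -/
noncomputable def bivSq (N : ℕ) (R : Fin N → Fin N → Fin N → Fin N → ℝ) :
    Fin N → Fin N → Fin N → Fin N → ℝ :=
  fun a b c d =>
    (1 / 2 : ℝ) * ∑ e, ∑ f, ∑ g, ∑ h,
      R a b e f * ηup N e g * ηup N f h * R g h c d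

/-- The Ricci contraction `Ric_{ab} = η^{cd} R_{acbd}` of a curvature-like tensor. -/
noncomputable def ricci (N : ℕ) (R : Fin N → Fin N → Fin N → Fin N → ℝ) :
    Fin N → Fin N → ℝ :=
  fun a b => ∑ c, ∑ d, ηup N c d * R a c b d

namespace NegBoost

variable {N : ℕ}

lemma zz_lt (hN : 2 ≤ N) : 0 < N := by omega
lemma oo_lt (hN : 2 ≤ N) : 1 < N := by omega
def zz (hN : 2 ≤ N) : Fin N := ⟨0, zz_lt hN⟩
def oo (hN : 2 ≤ N) : Fin N := ⟨1, oo_lt hN⟩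

def sw (hN : 2 ≤ N) (A : Fin N) : Fin N :=
  if (A : ℕ) = 0 then oo hN else if (A : ℕ) = 1 then zz hN else A

lemma sw_zz (hN : 2 ≤ N) : sw hN (zz hN) = oo hN := by simp [sw, zz]

lemma sw_oo (hN : 2 ≤ N) : sw hN (oo hN) = zz hN := by simp [sw, oo]

lemma sw_sp (hN : 2 ≤ N) {A : Fin N} (h : 2 ≤ (A : ℕ)) : sw hN A = A := by
  simp only [sw]; rw [if_neg (by omega), if_neg (by omega)]

lemma sw_sw (hN : 2 ≤ N) (A : Fin N) : sw hN (sw hN A) = A := by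
  by_cases h0 : (A : ℕ) = 0
  · have : A = zz hN := Fin.ext h0
    rw [this, sw_zz, sw_oo]
  · by_cases h1 : (A : ℕ) = 1
    · have : A = oo hN := Fin.ext h1
      rw [this, sw_oo, sw_zz]
    · have h2 : 2 ≤ (A : ℕ) := by omega
      rw [sw_sp hN h2, sw_sp hN h2]

lemma zz_val (hN : 2 ≤ N) : ((zz hN : Fin N) : ℕ) = 0 := rfl

lemma oo_val (hN : 2 ≤ N) : ((oo hN : Fin N) : ℕ) = 1 := rfl

lemma etanf_apply (hN : 2 ≤ N) (A B : Fin N) :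
    ηnf N A B = if B = sw hN A then 1 else 0 := by
  by_cases h0 : (A : ℕ) = 0
  · rw [show sw hN A = oo hN from by simp [sw, h0]]
    simp only [ηnf, Matrix.of_apply, Fin.ext_iff, oo_val, zz_val]
    split_ifs <;> first | rfl | (exfalso; omega)
  · by_cases h1 : (A : ℕ) = 1
    · rw [show sw hN A = zz hN from by simp [sw, h0, h1]]
      simp only [ηnf, Matrix.of_apply, Fin.ext_iff, oo_val, zz_val]
      split_ifs <;> first | rfl | (exfalso; omega)
    · have h2 : 2 ≤ (A : ℕ) := by omega
      rw [sw_sp hN h2]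
      simp only [ηnf, Matrix.of_apply, Fin.ext_iff]
      split_ifs <;> first | rfl | (exfalso; omega)

lemma eta_mul (hN : 2 ≤ N) : ηnf N * ηnf N = 1 := by
  ext A B
  rw [Matrix.mul_apply]
  have h : ∀ c : Fin N, ηnf N A c * ηnf N c B
      = if c = sw hN A then (if B = sw hN c then (1:ℝ) else 0) else 0 := by
    intro c; rw [etanf_apply hN, etanf_apply hN]; split_ifs <;> ring
  rw [Finset.sum_congr rfl fun c _ => h c, Finset.sum_ite_eq']
  simp [sw_sw, Matrix.one_apply, eq_comm]

lemma etaup_eq (hN : 2 ≤ N) : ηup N = ηnf N := by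
  unfold ηup; exact Matrix.inv_eq_right_inv (eta_mul hN)

lemma contract (hN : 2 ≤ N) (c : Fin N) (f : Fin N → ℝ) :
    ∑ d, ηup N c d * f d = f (sw hN c) := by
  rw [etaup_eq hN]
  have h : ∀ d : Fin N, ηnf N c d * f d = if d = sw hN c then f d else 0 := by
    intro d; rw [etanf_apply hN]; split_ifs <;> ring
  rw [Finset.sum_congr rfl fun d _ => h d, Finset.sum_ite_eq']
  simp

end NegBoost

namespace NegBoost

variable {N : ℕ}

def Vv (hN : 2 ≤ N) (R : Fin N → Fin N → Fin N → Fin N → ℝ) : Fin N → ℝ :=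
  fun i => if 2 ≤ (i : ℕ) then R (zz hN) (oo hN) (oo hN) i else 0

def Ww (hN : 2 ≤ N) (R : Fin N → Fin N → Fin N → Fin N → ℝ) :
    Fin N → Fin N → Fin N → ℝ :=
  fun i e f =>
    if 2 ≤ (i : ℕ) ∧ 2 ≤ (e : ℕ) ∧ 2 ≤ (f : ℕ) then R (oo hN) i e f else 0

variable (R : Fin N → Fin N → Fin N → Fin N → ℝ)

lemma symm_last (hcurv : CurvLike R) (a b c d : Fin N) :
    R a b c d = -R a b d c := by
  rw [hcurv.2 a b c d, hcurv.1 c d a b, hcurv.2 d c a b]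

lemma diag1 (hcurv : CurvLike R) (a c d : Fin N) : R a a c d = 0 := by
  have := hcurv.1 a a c d; linarith

lemma diag2 (hcurv : CurvLike R) (a b c : Fin N) : R a b c c = 0 := by
  have := symm_last R hcurv a b c c; linarith

lemma bw_lb (A : Fin N) : -1 ≤ bw A ∧ bw A ≤ 1 := by
  unfold bw; split_ifs <;> omega

lemma bw_zz (hN : 2 ≤ N) : bw (zz hN) = 1 := by simp [bw, zz]

lemma bw_oo (hN : 2 ≤ N) : bw (oo hN) = -1 := by simp [bw, oo]

lemma bw_sp {A : Fin N} (h : 2 ≤ (A : ℕ)) : bw A = 0 := by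
  unfold bw; rw [if_neg (by omega), if_neg (by omega)]

lemma Wanti (hN : 2 ≤ N) (hcurv : CurvLike R) (i e f : Fin N) :
    Ww hN R i e f = -Ww hN R i f e := by
  unfold Ww
  split_ifs with h1 h2 h2
  · exact symm_last R hcurv _ _ _ _
  · exact absurd ⟨h1.1, h1.2.2, h1.2.1⟩ h2
  · exact absurd ⟨h2.1, h2.2.2, h2.2.1⟩ h1
  · ring

/-- Ricci equation: for spatial `i`, `R_{011i} + ∑_c W_{cic} = 0`. -/
lemma ric_eq (hN : 2 ≤ N) (hcurv : CurvLike R)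
    (hneg : ∀ a b c d : Fin N, 0 ≤ bw a + bw b + bw c + bw d → R a b c d = 0)
    (hric : ∀ a b, ricci N R a b = 0) {i : Fin N} (hi : 2 ≤ (i : ℕ)) :
    R (zz hN) (oo hN) (oo hN) i + ∑ c, Ww hN R c i c = 0 := by
  have h0 := hric (oo hN) i
  unfold ricci at h0
  have h1 : ∑ c, R (oo hN) c i (sw hN c) = 0 := by
    rw [← h0]
    exact Finset.sum_congr rfl fun c _ =>
      (contract hN c fun d => R (oo hN) c i d).symm
  have hterm : ∀ c : Fin N, R (oo hN) c i (sw hN c)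
      = (if c = zz hN then R (zz hN) (oo hN) (oo hN) i else 0) + Ww hN R c i c := by
    intro c
    by_cases h0c : (c : ℕ) = 0
    · have hc : c = zz hN := Fin.ext h0c
      subst hc
      rw [sw_zz, if_pos rfl]
      have hW : Ww hN R (zz hN) i (zz hN) = 0 := by
        unfold Ww; rw [if_neg (by rw [zz_val]; omega)]
      rw [hW, add_zero, hcurv.2 (oo hN) (zz hN) i (oo hN),
        hcurv.1 i (oo hN) (oo hN) (zz hN),
        symm_last R hcurv (oo hN) i (oo hN) (zz hN),
        hcurv.2 (oo hN) i (zz hN) (oo hN)]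
      ring
    · by_cases h1c : (c : ℕ) = 1
      · have hc : c = oo hN := Fin.ext h1c
        subst hc
        rw [sw_oo, diag1 R hcurv (oo hN) i (zz hN),
          if_neg (by intro h; rw [h] at h1c; rw [zz_val] at h1c; omega)]
        have hW : Ww hN R (oo hN) i (oo hN) = 0 := by
          unfold Ww; rw [if_neg (by rw [oo_val]; omega)]
        rw [hW]; ring
      · have h2c : 2 ≤ (c : ℕ) := by omega
        rw [sw_sp hN h2c,
          if_neg (by intro h; rw [h, zz_val] at h2c; omega)]
        have hW : Ww hN R c i c = R (oo hN) c i c := by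
          unfold Ww; rw [if_pos ⟨h2c, hi, h2c⟩]
        rw [hW]; ring
  rw [Finset.sum_congr rfl fun c _ => hterm c, Finset.sum_add_distrib,
    Finset.sum_ite_eq'] at h1
  simpa using h1

/-- Contraction of the quadruple sum in `bivSq`. -/
lemma quad (hN : 2 ≤ N) (a b c d : Fin N) :
    ∑ e, ∑ f, ∑ g, ∑ h, R a b e f * ηup N e g * ηup N f h * R g h c d
      = ∑ e, ∑ f, R a b e f * R (sw hN e) (sw hN f) c d := by
  refine Finset.sum_congr rfl fun e _ => Finset.sum_congr rfl fun f _ => ?_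
  have h1 : ∀ g : Fin N, ∑ h, R a b e f * ηup N e g * ηup N f h * R g h c d
      = R a b e f * (ηup N e g * R g (sw hN f) c d) := by
    intro g
    calc ∑ h, R a b e f * ηup N e g * ηup N f h * R g h c d
        = (R a b e f * ηup N e g) * ∑ h, ηup N f h * R g h c d := by
          rw [Finset.mul_sum]; exact Finset.sum_congr rfl fun h _ => by ring
      _ = R a b e f * (ηup N e g * R g (sw hN f) c d) := by
          rw [contract hN f fun h => R g h c d]; ring
  calc ∑ g, ∑ h, R a b e f * ηup N e g * ηup N f h * R g h c d
      = ∑ g, R a b e f * (ηup N e g * R g (sw hN f) c d) :=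
        Finset.sum_congr rfl fun g _ => h1 g
    _ = R a b e f * ∑ g, ηup N e g * R g (sw hN f) c d := by rw [Finset.mul_sum]
    _ = R a b e f * R (sw hN e) (sw hN f) c d := by
        rw [contract hN e fun g => R g (sw hN f) c d]

lemma sum_sum_ite (c : ℝ) (a b : Fin N) :
    ∑ e : Fin N, ∑ f : Fin N, (if e = a then (if f = b then c else 0) else 0) = c := by
  have h1 : ∀ e : Fin N, ∑ f : Fin N, (if e = a then (if f = b then c else 0) else 0)
      = if e = a then c else 0 := by
    intro e
    split_ifs with h
    · rw [Finset.sum_ite_eq']; simp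
    · simp
  rw [Finset.sum_congr rfl fun e _ => h1 e, Finset.sum_ite_eq']
  simp

end NegBoost

namespace NegBoost

variable {N : ℕ} (R : Fin N → Fin N → Fin N → Fin N → ℝ)

lemma zz_ne_oo (hN : 2 ≤ N) : zz hN ≠ oo hN :=
  Fin.ne_of_val_ne (by rw [zz_val, oo_val]; omega)

lemma Vv_sp (hN : 2 ≤ N) {i : Fin N} (hi : 2 ≤ (i : ℕ)) :
    Vv hN R i = R (zz hN) (oo hN) (oo hN) i := by
  unfold Vv; rw [if_pos hi]

lemma Vv_nsp (hN : 2 ≤ N) {i : Fin N} (hi : ¬ 2 ≤ (i : ℕ)) :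
    Vv hN R i = 0 := by
  unfold Vv; rw [if_neg hi]

lemma Ww_sp (hN : 2 ≤ N) {i e f : Fin N} (hi : 2 ≤ (i : ℕ)) (he : 2 ≤ (e : ℕ))
    (hf : 2 ≤ (f : ℕ)) : Ww hN R i e f = R (oo hN) i e f := by
  unfold Ww; rw [if_pos ⟨hi, he, hf⟩]

lemma Ww_nsp (hN : 2 ≤ N) {i e f : Fin N}
    (h : ¬ (2 ≤ (i : ℕ) ∧ 2 ≤ (e : ℕ) ∧ 2 ≤ (f : ℕ))) : Ww hN R i e f = 0 := by
  unfold Ww; rw [if_neg h]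

/-- Bivector-square equation: `∑_{ef} W_{ief} W_{jef} = 2 V_i V_j`. -/
lemma biv_eq (hN : 2 ≤ N) (hcurv : CurvLike R)
    (hneg : ∀ a b c d : Fin N, 0 ≤ bw a + bw b + bw c + bw d → R a b c d = 0)
    (hsq : ∀ a b c d, bivSq N R a b c d = 0) (i j : Fin N) :
    ∑ e, ∑ f, Ww hN R i e f * Ww hN R j e f = 2 * Vv hN R i * Vv hN R j := by
  by_cases hi : 2 ≤ (i : ℕ)
  · by_cases hj : 2 ≤ (j : ℕ)
    · -- main case
      have h0 := hsq (oo hN) i (oo hN) j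
      unfold bivSq at h0
      rw [quad R hN] at h0
      have h1 : ∑ e, ∑ f, R (oo hN) i e f * R (sw hN e) (sw hN f) (oo hN) j = 0 := by
        linarith
      have hterm : ∀ e f : Fin N, R (oo hN) i e f * R (sw hN e) (sw hN f) (oo hN) j
          = Ww hN R i e f * Ww hN R j e f
            + (if e = zz hN then (if f = oo hN then
                -(R (zz hN) (oo hN) (oo hN) i * R (zz hN) (oo hN) (oo hN) j) else 0) else 0)
            + (if e = oo hN then (if f = zz hN then
                -(R (zz hN) (oo hN) (oo hN) i * R (zz hN) (oo hN) (oo hN) j) else 0) else 0) := by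
        intro e f
        by_cases he0 : (e : ℕ) = 0
        · have he : e = zz hN := Fin.ext he0
          subst he
          rw [sw_zz, if_pos rfl, if_neg (zz_ne_oo hN),
            Ww_nsp R hN (by rw [zz_val]; omega), zero_mul]
          by_cases hf0 : (f : ℕ) = 0
          · have hf : f = zz hN := Fin.ext hf0
            subst hf
            rw [if_neg (zz_ne_oo hN), diag2 R hcurv, zero_mul]
            ring
          · by_cases hf1 : (f : ℕ) = 1
            · have hf : f = oo hN := Fin.ext hf1
              subst hf
              rw [if_pos rfl, sw_oo, hcurv.2 (oo hN) i (zz hN) (oo hN),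
                hcurv.1 (oo hN) (zz hN) (oo hN) j]
              ring
            · have hf2 : 2 ≤ (f : ℕ) := by omega
              rw [if_neg (fun h => by rw [h, oo_val] at hf2; omega),
                hneg (oo hN) i (zz hN) f
                  (by rw [bw_oo hN, bw_zz hN, bw_sp hi, bw_sp hf2]; omega), zero_mul]
              ring
        · by_cases he1 : (e : ℕ) = 1
          · have he : e = oo hN := Fin.ext he1
            subst he
            rw [sw_oo, if_neg (Ne.symm (zz_ne_oo hN)), if_pos rfl,
              Ww_nsp R hN (by rw [oo_val]; omega), zero_mul]
            by_cases hf0 : (f : ℕ) = 0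
            · have hf : f = zz hN := Fin.ext hf0
              subst hf
              rw [if_pos rfl, sw_zz, symm_last R hcurv (oo hN) i (oo hN) (zz hN),
                hcurv.2 (oo hN) i (zz hN) (oo hN)]
              ring
            · by_cases hf1 : (f : ℕ) = 1
              · have hf : f = oo hN := Fin.ext hf1
                subst hf
                rw [if_neg (Ne.symm (zz_ne_oo hN)), diag2 R hcurv, zero_mul]
                ring
              · have hf2 : 2 ≤ (f : ℕ) := by omega
                rw [if_neg (fun h => by rw [h, zz_val] at hf2; omega), sw_sp hN hf2,
                  hneg (zz hN) f (oo hN) j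
                    (by rw [bw_oo hN, bw_zz hN, bw_sp hj, bw_sp hf2]; omega), mul_zero]
                ring
          · have he2 : 2 ≤ (e : ℕ) := by omega
            rw [sw_sp hN he2,
              if_neg (fun h => by rw [h, zz_val] at he2; omega),
              if_neg (fun h => by rw [h, oo_val] at he2; omega)]
            by_cases hf0 : (f : ℕ) = 0
            · have hf : f = zz hN := Fin.ext hf0
              subst hf
              rw [Ww_nsp R hN (by rw [zz_val]; omega),
                hneg (oo hN) i e (zz hN)
                  (by rw [bw_oo hN, bw_zz hN, bw_sp hi, bw_sp he2]; omega), zero_mul]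
              ring
            · by_cases hf1 : (f : ℕ) = 1
              · have hf : f = oo hN := Fin.ext hf1
                subst hf
                rw [sw_oo, Ww_nsp R hN (by rw [oo_val]; omega),
                  hneg e (zz hN) (oo hN) j
                    (by rw [bw_oo hN, bw_zz hN, bw_sp hj, bw_sp he2]; omega), mul_zero]
                ring
              · have hf2 : 2 ≤ (f : ℕ) := by omega
                rw [sw_sp hN hf2, Ww_sp R hN hi he2 hf2, Ww_sp R hN hj he2 hf2,
                  hcurv.2 e f (oo hN) j]
                ring
      rw [Finset.sum_congr rfl fun e _ => Finset.sum_congr rfl fun f _ => hterm e f] at h1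
      simp only [Finset.sum_add_distrib] at h1
      rw [sum_sum_ite, sum_sum_ite] at h1
      rw [Vv_sp R hN hi, Vv_sp R hN hj]
      linarith
    · rw [Vv_nsp R hN hj, mul_zero]
      exact Finset.sum_eq_zero fun e _ => Finset.sum_eq_zero fun f _ => by
        rw [Ww_nsp R hN (i := j) (fun h => hj h.1), mul_zero]
  · rw [Vv_nsp R hN hi, mul_zero, zero_mul]
    exact Finset.sum_eq_zero fun e _ => Finset.sum_eq_zero fun f _ => by
      rw [Ww_nsp R hN (i := i) (fun h => hi h.1), zero_mul]

end NegBoost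

namespace NegBoost

variable {N : ℕ} (R : Fin N → Fin N → Fin N → Fin N → ℝ)

lemma pull2 (c : ℝ) (F : Fin N → Fin N → ℝ) :
    ∑ e, ∑ f, c * F e f = c * ∑ e, ∑ f, F e f := by
  simp [Finset.mul_sum]

/-- Pointwise relation `V_i W_{jef} = V_j W_{ief}` from the sum-of-squares argument. -/
lemma rel (hN : 2 ≤ N) (hcurv : CurvLike R)
    (hneg : ∀ a b c d : Fin N, 0 ≤ bw a + bw b + bw c + bw d → R a b c d = 0)
    (hsq : ∀ a b c d, bivSq N R a b c d = 0) (i j e f : Fin N) :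
    Vv hN R i * Ww hN R j e f = Vv hN R j * Ww hN R i e f := by
  have hz : ∑ e', ∑ f',
      (Vv hN R i * Ww hN R j e' f' - Vv hN R j * Ww hN R i e' f')^2 = 0 := by
    have expand : ∀ e' f' : Fin N,
        (Vv hN R i * Ww hN R j e' f' - Vv hN R j * Ww hN R i e' f')^2
        = (Vv hN R i * Vv hN R i) * (Ww hN R j e' f' * Ww hN R j e' f')
          + ((-(2 * Vv hN R i * Vv hN R j)) * (Ww hN R i e' f' * Ww hN R j e' f')
          + (Vv hN R j * Vv hN R j) * (Ww hN R i e' f' * Ww hN R i e' f')) := by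
      intro e' f'; ring
    rw [Finset.sum_congr rfl fun e' _ => Finset.sum_congr rfl fun f' _ => expand e' f']
    simp only [Finset.sum_add_distrib]
    rw [pull2, pull2, pull2, biv_eq R hN hcurv hneg hsq j j,
      biv_eq R hN hcurv hneg hsq i j, biv_eq R hN hcurv hneg hsq i i]
    ring
  have h1 : ∑ f', (Vv hN R i * Ww hN R j e f' - Vv hN R j * Ww hN R i e f')^2 = 0 :=
    (Finset.sum_eq_zero_iff_of_nonneg fun x _ =>
      Finset.sum_nonneg fun y _ => sq_nonneg _).mp hz e (Finset.mem_univ e)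
  have h2 : (Vv hN R i * Ww hN R j e f - Vv hN R j * Ww hN R i e f)^2 = 0 :=
    (Finset.sum_eq_zero_iff_of_nonneg fun x _ => sq_nonneg _).mp h1 f (Finset.mem_univ f)
  have h3 := sq_eq_zero_iff.mp h2
  linarith

end NegBoost

open NegBoost

/-- **Lemma 10** (`lem:zr2`): let `R` be a curvature-like tensor of negative boost order
with respect to a null frame (all components of boost weight `≥ 0` vanish, so the only
possibly nonzero components are `R_{011i}`, `R_{1ijk}`, `R_{1i1j}`).  If the bivector
square vanishes, `R⁽²⁾ = 0`, and the Ricci contraction vanishes, then also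
`R_{011i} = 0` and `R_{1ijk} = 0` for all spatial `i, j, k`; that is, `R` is of
principal type N and its only possibly nonvanishing components are `R_{1i1j}`. -/


theorem negative_boost_order_type_N (N : ℕ) (hN : 2 ≤ N)
    (R : Fin N → Fin N → Fin N → Fin N → ℝ) (hcurv : CurvLike R)
    (hneg : ∀ a b c d : Fin N, 0 ≤ bw a + bw b + bw c + bw d → R a b c d = 0)
    (hsq : ∀ a b c d, bivSq N R a b c d = 0)
    (hric : ∀ a b, ricci N R a b = 0) :
    (∀ i : Fin N, 2 ≤ (i : ℕ) →
      R ⟨0, by omega⟩ ⟨1, by omega⟩ ⟨1, by omega⟩ i = 0) ∧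
    (∀ i j k : Fin N, 2 ≤ (i : ℕ) → 2 ≤ (j : ℕ) → 2 ≤ (k : ℕ) →
      R ⟨1, by omega⟩ i j k = 0) := by
  have hE1 : ∀ k : Fin N, Vv hN R k * (∑ m, Ww hN R m k m)
      = -(Vv hN R k * Vv hN R k) := by
    intro k
    by_cases hk : 2 ≤ (k : ℕ)
    · have h := ric_eq R hN hcurv hneg hric hk
      rw [Vv_sp R hN hk]
      have hsum : ∑ m, Ww hN R m k m
          = -(R (zz hN) (oo hN) (oo hN) k) := by linarith
      rw [hsum]; ring
    · rw [Vv_nsp R hN hk]; ring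
  have hrel := rel R hN hcurv hneg hsq
  have hQ1 : ∑ a, ∑ b, ∑ c, (Vv hN R a * Vv hN R b) * (Vv hN R c * Ww hN R a b c)
      = -((∑ k, Vv hN R k * Vv hN R k) * (∑ k, Vv hN R k * Vv hN R k)) := by
    have hin : ∀ a b : Fin N,
        ∑ c, (Vv hN R a * Vv hN R b) * (Vv hN R c * Ww hN R a b c)
          = (Vv hN R a * Vv hN R a) * (-(Vv hN R b * Vv hN R b)) := by
      intro a b
      have hpt : ∀ c, (Vv hN R a * Vv hN R b) * (Vv hN R c * Ww hN R a b c)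
          = (Vv hN R a * Vv hN R b) * (Vv hN R a * Ww hN R c b c) := by
        intro c; rw [hrel c a b c]
      rw [Finset.sum_congr rfl fun c _ => hpt c]
      have hc : ∑ c, (Vv hN R a * Vv hN R b) * (Vv hN R a * Ww hN R c b c)
          = (Vv hN R a * Vv hN R a) * (Vv hN R b * ∑ c, Ww hN R c b c) := by
        rw [Finset.mul_sum, Finset.mul_sum]
        exact Finset.sum_congr rfl fun c _ => by ring
      rw [hc, hE1 b]
    rw [Finset.sum_congr rfl fun a _ => Finset.sum_congr rfl fun b _ => hin a b]
    have h1 : ∀ a : Fin N, ∑ b, (Vv hN R a * Vv hN R a) * (-(Vv hN R b * Vv hN R b))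
        = (Vv hN R a * Vv hN R a) * (-(∑ k, Vv hN R k * Vv hN R k)) := by
      intro a
      rw [← Finset.sum_neg_distrib, Finset.mul_sum]
    rw [Finset.sum_congr rfl fun a _ => h1 a, ← Finset.sum_mul]
    ring
  have hQ2 : ∑ a, ∑ b, ∑ c, (Vv hN R a * Vv hN R b) * (Vv hN R c * Ww hN R a b c)
      = 0 := by
    have hswap : (∑ a, ∑ b, ∑ c, (Vv hN R a * Vv hN R b) * (Vv hN R c * Ww hN R a b c))
        = ∑ a, ∑ b, ∑ c, (Vv hN R a * Vv hN R c) * (Vv hN R b * Ww hN R a c b) :=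
      Finset.sum_congr rfl fun a _ => Finset.sum_comm
    have hptn : ∀ a b c : Fin N,
        (Vv hN R a * Vv hN R c) * (Vv hN R b * Ww hN R a c b)
          = -((Vv hN R a * Vv hN R b) * (Vv hN R c * Ww hN R a b c)) := by
      intro a b c
      rw [Wanti R hN hcurv a c b]
      ring
    have h2 : (∑ a, ∑ b, ∑ c, (Vv hN R a * Vv hN R b) * (Vv hN R c * Ww hN R a b c))
        = -(∑ a, ∑ b, ∑ c, (Vv hN R a * Vv hN R b) * (Vv hN R c * Ww hN R a b c)) := by
      nth_rewrite 1 [hswap]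
      rw [Finset.sum_congr rfl fun a _ => Finset.sum_congr rfl fun b _ =>
        Finset.sum_congr rfl fun c _ => hptn a b c]
      simp [Finset.sum_neg_distrib]
    linarith
  have hSS : (∑ k, Vv hN R k * Vv hN R k) * (∑ k, Vv hN R k * Vv hN R k) = 0 := by
    rw [hQ2] at hQ1; linarith
  have hS : ∑ k, Vv hN R k * Vv hN R k = 0 := mul_self_eq_zero.mp hSS
  have hV0 : ∀ k, Vv hN R k = 0 := fun k =>
    mul_self_eq_zero.mp ((Finset.sum_eq_zero_iff_of_nonneg
      (fun x _ => mul_self_nonneg _)).mp hS k (Finset.mem_univ k))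
  have hW0 : ∀ i e f, Ww hN R i e f = 0 := by
    intro i e f
    have h2 := biv_eq R hN hcurv hneg hsq i i
    rw [hV0 i] at h2
    have h2' : ∑ e', ∑ f', Ww hN R i e' f' * Ww hN R i e' f' = 0 := by
      rw [h2]; ring
    have h3 : ∑ f', Ww hN R i e f' * Ww hN R i e f' = 0 :=
      (Finset.sum_eq_zero_iff_of_nonneg fun x _ =>
        Finset.sum_nonneg fun y _ => mul_self_nonneg _).mp h2' e (Finset.mem_univ e)
    exact mul_self_eq_zero.mp
      ((Finset.sum_eq_zero_iff_of_nonneg fun x _ => mul_self_nonneg _).mp h3 f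
        (Finset.mem_univ f))
  constructor
  · intro i hi
    have h := hV0 i
    rw [Vv_sp R hN hi] at h
    exact h
  · intro i j k hi hj hk
    have h := hW0 i j k
    rw [Ww_sp R hN hi hj hk] at h
    exact h
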